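/- Let V be a real inner product space, let u, v, q be unit vectors in V with q in the span of u and v, let ξ ∈ [0, π/2], and suppose the (undirected) angle between u and v equals π/2 + ξ or π/2 − ξ. Then |cos²(angle(q, u)) + cos²(angle(q, v)) − 1| ≤ sin ξ, where angle(·,·) denotes the undirected angle between two vectors. -/
import Mathlib

open InnerProductGeometry Real
open RealInnerProductSpace

lemma key_ineq (a b c : ℝ) (h1 : a^2 + b^2 + 2*a*b*c = 1) (hc : |c| ≤ 1) :
    |(a + b*c)^2 + (b + a*c)^2 - 1| ≤ |c| := by
  have hc1 : c ≤ 1 := le_of_abs_le hc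
  have hc2 : -1 ≤ c := neg_le_of_abs_le hc
  have h2 : ((a + b*c)^2 + (b + a*c)^2 - 1) + c = c * ((a+b)^2 * (1+c)) := by nlinarith [h1]
  have h3 : c - ((a + b*c)^2 + (b + a*c)^2 - 1) = c * ((a-b)^2 * (1-c)) := by nlinarith [h1]
  rcases le_or_gt 0 c with h0 | h0
  · rw [abs_of_nonneg h0, abs_le]
    constructor
    · nlinarith [mul_nonneg h0 (mul_nonneg (sq_nonneg (a+b)) (by linarith : (0:ℝ) ≤ 1+c))]
    · nlinarith [mul_nonneg h0 (mul_nonneg (sq_nonneg (a-b)) (by linarith : (0:ℝ) ≤ 1-c))]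
  · rw [abs_of_neg h0, abs_le]
    constructor
    · nlinarith [mul_nonneg (by linarith : (0:ℝ) ≤ -c) (mul_nonneg (sq_nonneg (a-b)) (by linarith : (0:ℝ) ≤ 1-c))]
    · nlinarith [mul_nonneg (by linarith : (0:ℝ) ≤ -c) (mul_nonneg (sq_nonneg (a+b)) (by linarith : (0:ℝ) ≤ 1+c))]

/-- Angle-form of Theorem 1: if the undirected angle between unit vectors
`u` and `v` equals `π/2 + ξ` or `π/2 - ξ` with `ξ ∈ [0, π/2]`, then for any
unit vector `q` in the span of `u` and `v`, the total squared-cosine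
contribution deviates from `1` by at most `sin ξ`. -/
theorem angle_form_outlier_suppression
    {V : Type*} [NormedAddCommGroup V] [InnerProductSpace ℝ V]
    (u v q : V) (hu : ‖u‖ = 1) (hv : ‖v‖ = 1) (hq : ‖q‖ = 1)
    (hspan : q ∈ Submodule.span ℝ ({u, v} : Set V))
    (ξ : ℝ) (hξ : ξ ∈ Set.Icc 0 (π / 2))
    (hangle : angle u v = π / 2 + ξ ∨ angle u v = π / 2 - ξ) :
    |Real.cos (angle q u) ^ 2 + Real.cos (angle q v) ^ 2 - 1| ≤ Real.sin ξ := by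
  obtain ⟨a, b, hab⟩ := Submodule.mem_span_pair.mp hspan
  set c : ℝ := ⟪u, v⟫ with hcdef
  have hsξ : 0 ≤ Real.sin ξ := Real.sin_nonneg_of_nonneg_of_le_pi hξ.1 (by linarith [hξ.2, Real.pi_pos])
  have hc : |c| = Real.sin ξ := by
    have h := InnerProductGeometry.cos_angle u v
    rw [hu, hv] at h
    simp only [mul_one, div_one] at h
    rcases hangle with h1 | h1
    · rw [h1] at h
      have h2 : Real.cos (π / 2 + ξ) = -Real.sin ξ := by
        rw [Real.cos_add]; simp
      rw [h2] at h
      rw [hcdef, ← h, abs_neg, abs_of_nonneg hsξ]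
    · rw [h1, Real.cos_pi_div_two_sub] at h
      rw [hcdef, ← h, abs_of_nonneg hsξ]
  have huu : ⟪u, u⟫ = 1 := by
    rw [real_inner_self_eq_norm_sq, hu]; norm_num
  have hvv : ⟪v, v⟫ = 1 := by
    rw [real_inner_self_eq_norm_sq, hv]; norm_num
  have hvu : ⟪v, u⟫ = c := (real_inner_comm v u).symm
  have hqu : ⟪q, u⟫ = a + b * c := by
    rw [← hab, inner_add_left, real_inner_smul_left, real_inner_smul_left, huu, hvu]; ring
  have hqv : ⟪q, v⟫ = b + a * c := by
    rw [← hab, inner_add_left, real_inner_smul_left, real_inner_smul_left, hvv, hcdef]; ring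
  have hnorm : a^2 + b^2 + 2*a*b*c = 1 := by
    have : ⟪q, q⟫ = 1 := by rw [real_inner_self_eq_norm_sq, hq]; norm_num
    rw [← hab] at this
    simp only [inner_add_left, inner_add_right, real_inner_smul_left, real_inner_smul_right,
      huu, hvv, hvu, ← hcdef] at this
    nlinarith [this]
  have hcqu : Real.cos (angle q u) = a + b * c := by
    rw [InnerProductGeometry.cos_angle, hq, hu, hqu]; norm_num
  have hcqv : Real.cos (angle q v) = b + a * c := by
    rw [InnerProductGeometry.cos_angle, hq, hv, hqv]; norm_num
  rw [hcqu, hcqv, ← hc]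
  exact key_ineq a b c hnorm (by rw [hc]; exact Real.sin_le_one ξ)
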